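/- The cochain DG algebra B₈ with underlying graded algebra k⟨x₁,x₂⟩ (generators in degree 1) and differential given by ∂(x₁) = x₂², ∂(x₂) = x₂² has cohomology the polynomial algebra on the class of x₂ − x₁: for every j ≥ 0, Hʲ(B₈) is one-dimensional, spanned by the class of (x₂ − x₁)ʲ. -/

import Mathlib

/-- The degree-`i` homogeneous component of the free algebra `k⟨x_1,...,x_n⟩`
with all generators in degree `1`: the span of the words of length `i`. -/
noncomputable def deg (k : Type*) [CommRing k] (n : ℕ) (i : ℕ) :
    Submodule k (FreeAlgebra k (Fin n)) :=
  Submodule.span k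
    {w | ∃ f : Fin i → Fin n, w = (List.ofFn fun j => FreeAlgebra.ι k (f j)).prod}

namespace Stmt10

open FreeAlgebra

variable {k : Type*} [Field k]

/-- the word associated to a list of letters -/
noncomputable def wl (l : List (Fin 2)) : FreeAlgebra k (Fin 2) :=
  (l.map (FreeAlgebra.ι k)).prod

@[simp] lemma wl_nil : (wl [] : FreeAlgebra k (Fin 2)) = 1 := by simp [wl]

@[simp] lemma wl_cons (i : Fin 2) (l : List (Fin 2)) :
    (wl (i :: l) : FreeAlgebra k (Fin 2)) = FreeAlgebra.ι k i * wl l := by simp [wl]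

lemma wl_append (l l' : List (Fin 2)) :
    (wl (l ++ l') : FreeAlgebra k (Fin 2)) = wl l * wl l' := by simp [wl]

lemma wl_replicate (a : ℕ) (i : Fin 2) :
    (wl (List.replicate a i) : FreeAlgebra k (Fin 2)) = (FreeAlgebra.ι k i) ^ a := by
  simp [wl]

lemma wl_mem_deg (l : List (Fin 2)) : (wl l : FreeAlgebra k (Fin 2)) ∈ deg k 2 l.length := by
  refine Submodule.subset_span ⟨l.get, ?_⟩
  have h : (fun j => FreeAlgebra.ι k (l.get j)) = (FreeAlgebra.ι k) ∘ l.get := rfl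
  rw [h, ← List.map_ofFn, List.ofFn_get]
  rfl

lemma deg_eq (i : ℕ) : deg k 2 i =
    Submodule.span k {w | ∃ l : List (Fin 2), l.length = i ∧ w = wl l} := by
  unfold deg; congr 1; ext w
  constructor
  · rintro ⟨f, rfl⟩
    refine ⟨List.ofFn f, by simp, ?_⟩
    have h : (fun j => FreeAlgebra.ι k (f j)) = (FreeAlgebra.ι k) ∘ f := rfl
    rw [h, ← List.map_ofFn]
    rfl
  · rintro ⟨l, hl, rfl⟩
    subst hl
    refine ⟨l.get, ?_⟩
    have h : (fun j => FreeAlgebra.ι k (l.get j)) = (FreeAlgebra.ι k) ∘ l.get := rfl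
    rw [h, ← List.map_ofFn, List.ofFn_get]
    rfl

lemma one_mem_deg0 : (1 : FreeAlgebra k (Fin 2)) ∈ deg k 2 0 := by
  simpa using wl_mem_deg (k := k) []

lemma ι_mem_deg1 (i : Fin 2) : (FreeAlgebra.ι k i) ∈ deg k 2 1 := by
  simpa using wl_mem_deg (k := k) [i]

lemma deg_mul {p q : ℕ} {x x' : FreeAlgebra k (Fin 2)}
    (hx : x ∈ deg k 2 p) (hx' : x' ∈ deg k 2 q) : x * x' ∈ deg k 2 (p + q) := by
  rw [deg_eq] at hx hx' ⊢
  have h := Submodule.mul_mem_mul hx hx'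
  rw [Submodule.span_mul_span] at h
  refine Submodule.span_le.2 ?_ h
  rintro w hw
  rw [Set.mem_mul] at hw
  obtain ⟨u, ⟨lu, hlu, rfl⟩, v, ⟨lv, hlv, rfl⟩, rfl⟩ := hw
  exact Submodule.subset_span ⟨lu ++ lv, by simp [hlu, hlv], (wl_append lu lv).symm⟩

lemma pow_mem_deg {x : FreeAlgebra k (Fin 2)} (hx : x ∈ deg k 2 1) (j : ℕ) :
    x ^ j ∈ deg k 2 j := by
  induction j with
  | zero => simpa using one_mem_deg0
  | succ n ih => rw [pow_succ]; exact deg_mul ih hx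

lemma span_wl_top : Submodule.span k {w : FreeAlgebra k (Fin 2) | ∃ l, w = wl l} = ⊤ := by
  rw [eq_top_iff]
  rintro x -
  induction x using FreeAlgebra.induction with
  | grade0 r =>
    rw [Algebra.algebraMap_eq_smul_one]
    exact Submodule.smul_mem _ _ (Submodule.subset_span ⟨[], by simp⟩)
  | grade1 i => exact Submodule.subset_span ⟨[i], by simp⟩
  | mul a b ha hb =>
    have h := Submodule.mul_mem_mul ha hb
    rw [Submodule.span_mul_span] at h
    refine Submodule.span_le.2 ?_ h
    rintro w hw
    rw [Set.mem_mul] at hw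
    obtain ⟨u, ⟨lu, rfl⟩, v, ⟨lv, rfl⟩, rfl⟩ := hw
    exact Submodule.subset_span ⟨lu ++ lv, (wl_append lu lv).symm⟩
  | add a b ha hb => exact Submodule.add_mem _ ha hb

/-- the homotopy on a word, inside the leading `y`-block (having already seen `b` ys) -/
noncomputable def hy : ℕ → List (Fin 2) → FreeAlgebra k (Fin 2)
  | b, [] => if Even b then (FreeAlgebra.ι k 1) ^ (b - 1) else 0
  | b, i :: l =>
    if i = 1 then hy (b + 1) l
    else if Even b then (FreeAlgebra.ι k 1) ^ (b - 1) * wl (i :: l) else 0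

/-- the homotopy on a word -/
noncomputable def hw : List (Fin 2) → FreeAlgebra k (Fin 2)
  | [] => 0
  | i :: l => if i = 1 then hy 1 l else -(FreeAlgebra.ι k (0 : Fin 2) * hw l)

@[simp] lemma hw_nil : (hw [] : FreeAlgebra k (Fin 2)) = 0 := rfl

lemma hw_cons0 (l : List (Fin 2)) :
    (hw (0 :: l) : FreeAlgebra k (Fin 2)) = -(FreeAlgebra.ι k 0 * hw l) := by
  simp [hw]

lemma hw_cons1 (l : List (Fin 2)) : (hw (1 :: l) : FreeAlgebra k (Fin 2)) = hy 1 l := by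
  simp [hw]

lemma hy_ones (b c : ℕ) (u : List (Fin 2)) :
    (hy b (List.replicate c 1 ++ u) : FreeAlgebra k (Fin 2)) = hy (b + c) u := by
  induction c generalizing b with
  | zero => simp
  | succ n ih =>
    rw [List.replicate_succ, List.cons_append]
    show (hy b (1 :: (List.replicate n 1 ++ u)) : FreeAlgebra k (Fin 2)) = _
    rw [show (hy b (1 :: (List.replicate n 1 ++ u)) : FreeAlgebra k (Fin 2))
        = hy (b + 1) (List.replicate n 1 ++ u) from by simp [hy]]
    rw [ih]
    ring_nf

lemma hy_eval (b : ℕ) (u : List (Fin 2)) (hu : u = [] ∨ ∃ u', u = 0 :: u') :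
    (hy b u : FreeAlgebra k (Fin 2)) =
      if Even b then (FreeAlgebra.ι k 1) ^ (b - 1) * wl u else 0 := by
  rcases hu with rfl | ⟨u', rfl⟩
  · simp [hy]
  · simp [hy]

lemma hw_replicate0 (a : ℕ) : (hw (List.replicate a 0) : FreeAlgebra k (Fin 2)) = 0 := by
  induction a with
  | zero => simp
  | succ n ih => rw [List.replicate_succ, hw_cons0, ih, mul_zero, neg_zero]

lemma hw_main (a b : ℕ) (hb : b ≠ 0) (u : List (Fin 2)) (hu : u = [] ∨ ∃ u', u = 0 :: u') :
    (hw (List.replicate a 0 ++ List.replicate b 1 ++ u) : FreeAlgebra k (Fin 2)) =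
      ((-1 : k) ^ a) • ((FreeAlgebra.ι k 0) ^ a *
        (if Even b then (FreeAlgebra.ι k 1) ^ (b - 1) * wl u else 0)) := by
  induction a with
  | zero =>
    obtain ⟨b', rfl⟩ : ∃ b', b = b' + 1 := ⟨b - 1, by omega⟩
    rw [List.replicate_zero, List.nil_append, List.replicate_succ, List.cons_append, hw_cons1,
      hy_ones, hy_eval _ _ hu]
    simp [add_comm]
  | succ n ih =>
    rw [List.replicate_succ, List.cons_append, List.cons_append, hw_cons0, ih,
      mul_smul_comm, ← neg_smul, ← mul_assoc, ← pow_succ']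
    congr 1
    rw [pow_succ]
    ring

/-- decomposition of a list into leading ones and a rest not starting with `1` -/
lemma ones_decomp (l : List (Fin 2)) :
    ∃ b u, l = List.replicate b 1 ++ u ∧ (u = [] ∨ ∃ u', u = 0 :: u') := by
  induction l with
  | nil => exact ⟨0, [], by simp⟩
  | cons i l ih =>
    rcases (by decide : ∀ j : Fin 2, j = 0 ∨ j = 1) i with rfl | rfl
    · exact ⟨0, 0 :: l, by simp⟩
    · obtain ⟨b, u, rfl, hu⟩ := ih
      exact ⟨b + 1, u, by rw [List.replicate_succ]; simp, hu⟩

/-- decomposition of a list into leading zeros, a block of ones, and a rest -/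
lemma decomp (l : List (Fin 2)) :
    ∃ a b u, l = List.replicate a 0 ++ List.replicate b 1 ++ u ∧
      (u = [] ∨ ∃ u', u = 0 :: u') ∧ (b = 0 → u = []) := by
  induction l with
  | nil => exact ⟨0, 0, [], by simp⟩
  | cons i l ih =>
    rcases (by decide : ∀ j : Fin 2, j = 0 ∨ j = 1) i with rfl | rfl
    · obtain ⟨a, b, u, rfl, hu, hb⟩ := ih
      exact ⟨a + 1, b, u, by rw [List.replicate_succ]; simp, hu, hb⟩
    · obtain ⟨b, u, rfl, hu⟩ := ones_decomp l
      exact ⟨0, b + 1, u, by rw [List.replicate_succ]; simp, hu, by omega⟩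

lemma e_ι (i : Fin 2) :
    FreeAlgebra.equivMonoidAlgebraFreeMonoid (R := k) (X := Fin 2) (FreeAlgebra.ι k i) =
      MonoidAlgebra.single (FreeMonoid.of i) 1 := by
  simp [FreeAlgebra.equivMonoidAlgebraFreeMonoid]

lemma e_wl (l : List (Fin 2)) :
    FreeAlgebra.equivMonoidAlgebraFreeMonoid (R := k) (X := Fin 2) (wl l) =
      MonoidAlgebra.single (FreeMonoid.ofList l) 1 := by
  induction l with
  | nil => rw [wl_nil, map_one]; rfl
  | cons i l ih =>
    rw [wl_cons, map_mul, e_ι, ih, MonoidAlgebra.single_mul_single, one_mul]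
    congr 1

lemma basis_wl (w : FreeMonoid (Fin 2)) :
    FreeAlgebra.basisFreeMonoid k (Fin 2) w = wl (FreeMonoid.toList w) := by
  have h := e_wl (k := k) (FreeMonoid.toList w)
  rw [FreeAlgebra.basisFreeMonoid, Module.Basis.map_apply]
  simp only [Finsupp.coe_basisSingleOne, AlgEquiv.toLinearEquiv_apply]
  have h2 := congrArg (FreeAlgebra.equivMonoidAlgebraFreeMonoid (R := k) (X := Fin 2)).symm h
  rw [AlgEquiv.symm_apply_apply] at h2
  exact h2.symm

/-- the homotopy, as a linear map -/
noncomputable def H : FreeAlgebra k (Fin 2) →ₗ[k] FreeAlgebra k (Fin 2) :=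
  (FreeAlgebra.basisFreeMonoid k (Fin 2)).constr k (fun w => hw (FreeMonoid.toList w))

lemma H_wl (l : List (Fin 2)) : (H (wl l) : FreeAlgebra k (Fin 2)) = hw l := by
  have h : (wl l : FreeAlgebra k (Fin 2)) =
      FreeAlgebra.basisFreeMonoid k (Fin 2) (FreeMonoid.ofList l) := by
    rw [basis_wl]; rfl
  rw [h, H, Module.Basis.constr_basis]
  rfl

lemma H_word (a b : ℕ) (hb : b ≠ 0) (u : List (Fin 2)) (hu : u = [] ∨ ∃ u', u = 0 :: u') :
    (H ((FreeAlgebra.ι k 0) ^ a * ((FreeAlgebra.ι k 1) ^ b * wl u)) : FreeAlgebra k (Fin 2)) =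
      ((-1 : k) ^ a) • ((FreeAlgebra.ι k 0) ^ a *
        (if Even b then (FreeAlgebra.ι k 1) ^ (b - 1) * wl u else 0)) := by
  have h : (FreeAlgebra.ι k 0) ^ a * ((FreeAlgebra.ι k 1) ^ b * wl u) =
      wl (List.replicate a 0 ++ List.replicate b 1 ++ u) := by
    rw [wl_append, wl_append, wl_replicate, wl_replicate, mul_assoc]
  rw [h, H_wl, hw_main a b hb u hu]

lemma H_zpow (j : ℕ) : (H ((FreeAlgebra.ι k 0) ^ j) : FreeAlgebra k (Fin 2)) = 0 := by
  rw [← wl_replicate, H_wl, hw_replicate0]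

lemma H_one : (H 1 : FreeAlgebra k (Fin 2)) = 0 := by
  simpa using H_zpow (k := k) 0

lemma H_key (a b : ℕ) (hb : b ≠ 0) (m : FreeAlgebra k (Fin 2)) :
    (H ((FreeAlgebra.ι k 0) ^ a * ((FreeAlgebra.ι k 1) ^ b * (FreeAlgebra.ι k 0 * m)))
        : FreeAlgebra k (Fin 2)) =
      if Even b then
        ((-1 : k) ^ a) • ((FreeAlgebra.ι k 0) ^ a *
          ((FreeAlgebra.ι k 1) ^ (b - 1) * (FreeAlgebra.ι k 0 * m)))
      else 0 := by
  have hm : m ∈ Submodule.span k {w : FreeAlgebra k (Fin 2) | ∃ l, w = wl l} := by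
    rw [span_wl_top]; exact Submodule.mem_top
  induction hm using Submodule.span_induction with
  | mem x hx =>
    obtain ⟨l, rfl⟩ := hx
    have h0 : (FreeAlgebra.ι k 0 : FreeAlgebra k (Fin 2)) * wl l = wl (0 :: l) :=
      (wl_cons 0 l).symm
    rw [h0, H_word a b hb (0 :: l) (Or.inr ⟨l, rfl⟩)]
    by_cases he : Even b
    · rw [if_pos he, if_pos he]
    · rw [if_neg he, if_neg he, mul_zero, smul_zero]
  | zero => simp
  | add x x' hx hx' ihx ihx' =>
    rw [mul_add, mul_add, mul_add, map_add, ihx, ihx']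
    by_cases he : Even b
    · rw [if_pos he, if_pos he, if_pos he]
      simp only [mul_add, smul_add]
    · rw [if_neg he, if_neg he, if_neg he, add_zero]
  | smul c x hx ihx =>
    rw [mul_smul_comm, mul_smul_comm, mul_smul_comm, map_smul, ihx]
    by_cases he : Even b
    · rw [if_pos he, if_pos he]
      simp only [mul_smul_comm]
      rw [smul_comm]
    · rw [if_neg he, if_neg he, smul_zero]

section D

variable (D : FreeAlgebra k (Fin 2) →ₗ[k] FreeAlgebra k (Fin 2))
variable (hL : ∀ (p : ℕ) (a b : FreeAlgebra k (Fin 2)), a ∈ deg k 2 p →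
  D (a * b) = D a * b + ((-1 : k) ^ p) • (a * D b))
variable (hz : D (FreeAlgebra.ι k 0) = 0)
variable (hy2 : D (FreeAlgebra.ι k 1) = FreeAlgebra.ι k 1 * FreeAlgebra.ι k 1)

include hL

lemma D_one : D 1 = 0 := by
  have h := hL 0 1 1 one_mem_deg0
  simp only [one_mul, mul_one, pow_zero, one_smul] at h
  exact (right_eq_add.mp h)

include hz

lemma D_zpow (a : ℕ) : D ((FreeAlgebra.ι k 0) ^ a) = 0 := by
  induction a with
  | zero => rw [pow_zero]; exact D_one D hL
  | succ n ih =>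
    rw [pow_succ', hL 1 _ _ (ι_mem_deg1 0), hz, ih, zero_mul, zero_add, mul_zero, smul_zero]

lemma D_zpow_mul (a : ℕ) (t : FreeAlgebra k (Fin 2)) :
    D ((FreeAlgebra.ι k 0) ^ a * t) = ((-1 : k) ^ a) • ((FreeAlgebra.ι k 0) ^ a * D t) := by
  rw [hL a _ _ (pow_mem_deg (ι_mem_deg1 0) a), D_zpow D hL hz, zero_mul, zero_add]

omit hz
include hy2

lemma D_ypow (b : ℕ) :
    D ((FreeAlgebra.ι k 1) ^ b) = if Even b then 0 else (FreeAlgebra.ι k 1) ^ (b + 1) := by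
  induction b with
  | zero => simpa using D_one D hL
  | succ n ih =>
    rw [pow_succ', hL 1 _ _ (ι_mem_deg1 1), hy2, ih]
    by_cases he : Even n
    · rw [if_pos he, if_neg (by simp [Nat.even_add_one, he]), mul_zero, smul_zero, add_zero,
        mul_assoc, ← pow_succ', ← pow_succ']
    · rw [if_neg he, if_pos (by simpa [Nat.even_add_one] using he), pow_one, neg_smul, one_smul,
        mul_assoc, ← pow_succ', ← pow_succ', add_neg_cancel]

omit hy2

lemma D_ypow_mul (b : ℕ) (t : FreeAlgebra k (Fin 2)) :
    D ((FreeAlgebra.ι k 1) ^ b * t) = D ((FreeAlgebra.ι k 1) ^ b) * t +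
      ((-1 : k) ^ b) • ((FreeAlgebra.ι k 1) ^ b * D t) :=
  hL b _ _ (pow_mem_deg (ι_mem_deg1 1) b)

end D

section main

variable (D : FreeAlgebra k (Fin 2) →ₗ[k] FreeAlgebra k (Fin 2))
variable (hL : ∀ (p : ℕ) (a b : FreeAlgebra k (Fin 2)), a ∈ deg k 2 p →
  D (a * b) = D a * b + ((-1 : k) ^ p) • (a * D b))
variable (hz : D (FreeAlgebra.ι k 0) = 0)
variable (hy2 : D (FreeAlgebra.ι k 1) = FreeAlgebra.ι k 1 * FreeAlgebra.ι k 1)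

include hL hz hy2

lemma word_identity (l : List (Fin 2)) :
    (H (wl l) : FreeAlgebra k (Fin 2)) ∈ deg k 2 (l.length - 1) ∧
    ∃ c : k, (wl l : FreeAlgebra k (Fin 2)) =
      c • (FreeAlgebra.ι k 0) ^ l.length + D (H (wl l)) + H (D (wl l)) := by
  have hsq : ∀ n : ℕ, ((-1 : k) ^ n) * ((-1 : k) ^ n) = 1 := fun n => by
    rw [← pow_add]; exact Even.neg_one_pow ⟨n, rfl⟩
  obtain ⟨a, b, u, rfl, hu, hb0⟩ := decomp l
  by_cases hb : b = 0
  · subst hb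
    obtain rfl := hb0 rfl
    simp only [List.replicate_zero, List.append_nil]
    rw [wl_replicate, H_zpow, D_zpow D hL hz, map_zero, map_zero]
    refine ⟨Submodule.zero_mem _, 1, ?_⟩
    simp
  · have hwl : (wl (List.replicate a 0 ++ List.replicate b 1 ++ u) : FreeAlgebra k (Fin 2))
        = (FreeAlgebra.ι k 0) ^ a * ((FreeAlgebra.ι k 1) ^ b * wl u) := by
      rw [wl_append, wl_append, wl_replicate, wl_replicate, mul_assoc]
    have hlen : (List.replicate a 0 ++ List.replicate b 1 ++ u).length = a + b + u.length := by
      simp [add_assoc]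
    have hDu : (H ((FreeAlgebra.ι k 0) ^ a * ((FreeAlgebra.ι k 1) ^ b * D (wl u)))
          : FreeAlgebra k (Fin 2)) =
        if Even b then ((-1 : k) ^ a) • ((FreeAlgebra.ι k 0) ^ a *
          ((FreeAlgebra.ι k 1) ^ (b - 1) * D (wl u))) else 0 := by
      rcases hu with rfl | ⟨u', rfl⟩
      · rw [wl_nil, D_one D hL]
        simp
      · have hD0 : D (wl (0 :: u')) = -(FreeAlgebra.ι k 0 * D (wl u')) := by
          rw [wl_cons, hL 1 _ _ (ι_mem_deg1 0), hz, zero_mul, zero_add, pow_one, neg_smul,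
            one_smul]
        rw [hD0, mul_neg, mul_neg, map_neg, H_key a b hb (D (wl u'))]
        by_cases he : Even b
        · rw [if_pos he, if_pos he]
          simp only [mul_neg, smul_neg]
        · rw [if_neg he, if_neg he, neg_zero]
    rw [hwl, hlen]
    by_cases he : Even b
    · have hob : ¬ Even (b - 1) := by
        rw [Nat.even_sub (by omega : 1 ≤ b)]
        simp [he]
      have hbo : Odd (b - 1) := Nat.not_even_iff_odd.mp hob
      have hHw : (H ((FreeAlgebra.ι k 0) ^ a * ((FreeAlgebra.ι k 1) ^ b * wl u))
            : FreeAlgebra k (Fin 2)) =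
          ((-1 : k) ^ a) • ((FreeAlgebra.ι k 0) ^ a *
            ((FreeAlgebra.ι k 1) ^ (b - 1) * wl u)) := by
        rw [H_word a b hb u hu, if_pos he]
      constructor
      · rw [hHw]
        have hm := deg_mul (pow_mem_deg (ι_mem_deg1 (k := k) 0) a)
          (deg_mul (pow_mem_deg (ι_mem_deg1 (k := k) 1) (b - 1)) (wl_mem_deg u))
        rw [show a + b + u.length - 1 = a + (b - 1 + u.length) from by omega]
        exact Submodule.smul_mem _ _ hm
      · refine ⟨0, ?_⟩
        rw [zero_smul, zero_add]
        rw [hHw, map_smul, D_zpow_mul D hL hz, D_ypow_mul D hL (b - 1),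
          D_ypow D hL hy2 (b - 1), if_neg hob]
        rw [D_zpow_mul D hL hz a, D_ypow_mul D hL b, D_ypow D hL hy2 b, if_pos he, zero_mul,
          zero_add]
        rw [show b - 1 + 1 = b from by omega]
        rw [Odd.neg_one_pow hbo, Even.neg_one_pow he, neg_smul, one_smul, one_smul]
        rw [map_smul, hDu, if_pos he]
        rw [smul_smul, smul_smul, hsq, one_smul, one_smul]
        rw [← mul_add, neg_add_cancel_right]
    · have heb1 : Even (b + 1) := Nat.even_add_one.mpr he
      have hHw0 : (H ((FreeAlgebra.ι k 0) ^ a * ((FreeAlgebra.ι k 1) ^ b * wl u))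
            : FreeAlgebra k (Fin 2)) = 0 := by
        rw [H_word a b hb u hu, if_neg he, mul_zero, smul_zero]
      refine ⟨by rw [hHw0]; exact Submodule.zero_mem _, 0, ?_⟩
      rw [zero_smul, zero_add, hHw0, map_zero, zero_add]
      rw [D_zpow_mul D hL hz a, D_ypow_mul D hL b, D_ypow D hL hy2 b, if_neg he]
      rw [mul_add, map_smul, map_add, mul_smul_comm, map_smul]
      rw [hDu, if_neg he, smul_zero, add_zero]
      rw [H_word a (b + 1) (by omega) u hu, if_pos heb1]
      rw [show b + 1 - 1 = b from rfl]
      rw [smul_smul, hsq, one_smul]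

lemma main_identity (j : ℕ) (x : FreeAlgebra k (Fin 2)) (hx : x ∈ deg k 2 j) :
    (H x : FreeAlgebra k (Fin 2)) ∈ deg k 2 (j - 1) ∧
    ∃ c : k, x = c • (FreeAlgebra.ι k 0) ^ j + D (H x) + H (D x) := by
  rw [deg_eq] at hx
  induction hx using Submodule.span_induction with
  | mem w hw =>
    obtain ⟨l, rfl, rfl⟩ := hw
    exact word_identity D hL hz hy2 l
  | zero =>
    refine ⟨by rw [map_zero]; exact Submodule.zero_mem _, 0, ?_⟩
    simp
  | add x x' hx hx' ih ih' =>
    obtain ⟨h1, c, hc⟩ := ih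
    obtain ⟨h1', c', hc'⟩ := ih'
    refine ⟨by rw [map_add]; exact Submodule.add_mem _ h1 h1', c + c', ?_⟩
    rw [map_add, map_add, map_add, map_add, add_smul]
    conv_lhs => rw [hc, hc']
    abel
  | smul r x hx ih =>
    obtain ⟨h1, c, hc⟩ := ih
    refine ⟨by rw [map_smul]; exact Submodule.smul_mem _ _ h1, r * c, ?_⟩
    rw [map_smul, map_smul, map_smul, map_smul, mul_smul, ← smul_add, ← smul_add]
    conv_lhs => rw [hc]

end main

section core2

variable (D : FreeAlgebra k (Fin 2) →ₗ[k] FreeAlgebra k (Fin 2))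
variable (hL : ∀ (p : ℕ) (a b : FreeAlgebra k (Fin 2)), a ∈ deg k 2 p →
  D (a * b) = D a * b + ((-1 : k) ^ p) • (a * D b))
variable (hz : D (FreeAlgebra.ι k 0) = 0)
variable (hy2 : D (FreeAlgebra.ι k 1) = FreeAlgebra.ι k 1 * FreeAlgebra.ι k 1)

include hL hz hy2

lemma core_nonexact (j : ℕ) (hDD : ∀ x, D (D x) = 0)
    (b : FreeAlgebra k (Fin 2)) (hb : b ∈ deg k 2 (j - 1))
    (hDb : D b = (FreeAlgebra.ι k 0) ^ j) : False := by
  obtain ⟨-, c, hc⟩ := main_identity D hL hz hy2 (j - 1) b hb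
  have h1 : D b = c • D ((FreeAlgebra.ι k 0) ^ (j - 1)) + D (D (H b)) + D (H (D b)) := by
    conv_lhs => rw [hc]
    rw [map_add, map_add, map_smul]
  rw [hDb] at h1
  rw [H_zpow, map_zero, D_zpow D hL hz, smul_zero, hDD, zero_add, add_zero] at h1
  have hψ := congrArg (FreeAlgebra.lift k (fun _ : Fin 2 => (Polynomial.X : Polynomial k))) h1
  rw [map_pow, map_zero, FreeAlgebra.lift_ι_apply] at hψ
  exact pow_ne_zero j Polynomial.X_ne_zero hψ

end core2

/-- the involutive change of variables `x₁ ↦ x₂ - x₁`, `x₂ ↦ x₂` -/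
noncomputable def τ : FreeAlgebra k (Fin 2) →ₐ[k] FreeAlgebra k (Fin 2) :=
  FreeAlgebra.lift k (fun i =>
    if i = 0 then FreeAlgebra.ι k 1 - FreeAlgebra.ι k 0 else FreeAlgebra.ι k 1)

@[simp] lemma τ_ι0 : (τ (FreeAlgebra.ι k 0) : FreeAlgebra k (Fin 2)) =
    FreeAlgebra.ι k 1 - FreeAlgebra.ι k 0 := by
  simp [τ, FreeAlgebra.lift_ι_apply]

@[simp] lemma τ_ι1 : (τ (FreeAlgebra.ι k 1) : FreeAlgebra k (Fin 2)) = FreeAlgebra.ι k 1 := by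
  simp [τ, FreeAlgebra.lift_ι_apply]

lemma τ_τ (x : FreeAlgebra k (Fin 2)) : τ (τ x) = x := by
  have h : (τ.comp τ : FreeAlgebra k (Fin 2) →ₐ[k] FreeAlgebra k (Fin 2)) = AlgHom.id k _ := by
    apply FreeAlgebra.hom_ext; funext i
    rcases (by decide : ∀ j : Fin 2, j = 0 ∨ j = 1) i with rfl | rfl <;>
      simp [map_sub]
  exact DFunLike.congr_fun h x

lemma τ_wl_mem (l : List (Fin 2)) : (τ (wl l) : FreeAlgebra k (Fin 2)) ∈ deg k 2 l.length := by
  induction l with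
  | nil => rw [wl_nil, map_one]; exact one_mem_deg0
  | cons i l ih =>
    rw [wl_cons, map_mul]
    have h1 : (τ (FreeAlgebra.ι k i) : FreeAlgebra k (Fin 2)) ∈ deg k 2 1 := by
      rcases (by decide : ∀ j : Fin 2, j = 0 ∨ j = 1) i with rfl | rfl
      · rw [τ_ι0]; exact Submodule.sub_mem _ (ι_mem_deg1 1) (ι_mem_deg1 0)
      · rw [τ_ι1]; exact ι_mem_deg1 1
    have := deg_mul h1 ih
    rwa [Nat.add_comm] at this

lemma τ_mem_deg {j : ℕ} {x : FreeAlgebra k (Fin 2)} (hx : x ∈ deg k 2 j) :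
    (τ x : FreeAlgebra k (Fin 2)) ∈ deg k 2 j := by
  rw [deg_eq] at hx
  induction hx using Submodule.span_induction with
  | mem w hw =>
    obtain ⟨l, rfl, rfl⟩ := hw
    exact τ_wl_mem l
  | zero => rw [map_zero]; exact Submodule.zero_mem _
  | add x x' hx hx' ih ih' => rw [map_add]; exact Submodule.add_mem _ ih ih'
  | smul r x hx ih => rw [map_smul]; exact Submodule.smul_mem _ _ ih

end Stmt10

open Stmt10

/-- the cochain DG algebra `B₈` on `k⟨x₁,x₂⟩` with
`∂(x₁) = x₂²`, `∂(x₂) = x₂²` has cohomology the polynomial algebra on the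
class of `x₂ − x₁`: for every `j ≥ 0`, `Hʲ(B₈)` is one-dimensional,
spanned by the class of `(x₂ − x₁)ʲ`. -/
theorem stmt10 {k : Type*} [Field k] [CharZero k]
    (d : FreeAlgebra k (Fin 2) →ₗ[k] FreeAlgebra k (Fin 2))
    (hL : ∀ (p : ℕ) (a b : FreeAlgebra k (Fin 2)), a ∈ deg k 2 p →
      d (a * b) = d a * b + ((-1 : k) ^ p) • (a * d b))
    (h1 : d (FreeAlgebra.ι k 0) = FreeAlgebra.ι k 1 * FreeAlgebra.ι k 1)
    (h2 : d (FreeAlgebra.ι k 1) = FreeAlgebra.ι k 1 * FreeAlgebra.ι k 1)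
    (hdd : ∀ x, d (d x) = 0) :
    (∀ j : ℕ, (FreeAlgebra.ι k 1 - FreeAlgebra.ι k 0) ^ j ∈ deg k 2 j ∧
      d ((FreeAlgebra.ι k 1 - FreeAlgebra.ι k 0) ^ j) = 0) ∧
    (∀ j : ℕ, 1 ≤ j →
      ¬ ∃ b ∈ deg k 2 (j - 1), d b = (FreeAlgebra.ι k 1 - FreeAlgebra.ι k 0) ^ j) ∧
    (∀ j : ℕ, ∀ a ∈ deg k 2 j, d a = 0 →
      ∃ c : k, ∃ b ∈ deg k 2 (j - 1),
        a = c • (FreeAlgebra.ι k 1 - FreeAlgebra.ι k 0) ^ j + d b) := by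
  classical
  let D : FreeAlgebra k (Fin 2) →ₗ[k] FreeAlgebra k (Fin 2) :=
    τ.toLinearMap ∘ₗ d ∘ₗ τ.toLinearMap
  have hDz : D (FreeAlgebra.ι k 0) = 0 := by
    show τ (d (τ (FreeAlgebra.ι k 0))) = 0
    rw [τ_ι0, map_sub, h2, h1, sub_self, map_zero]
  have hDy : D (FreeAlgebra.ι k 1) = FreeAlgebra.ι k 1 * FreeAlgebra.ι k 1 := by
    show τ (d (τ (FreeAlgebra.ι k 1))) = _
    rw [τ_ι1, h2, map_mul, τ_ι1]
  have hDL : ∀ (p : ℕ) (a b : FreeAlgebra k (Fin 2)), a ∈ deg k 2 p →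
      D (a * b) = D a * b + ((-1 : k) ^ p) • (a * D b) := by
    intro p a b ha
    show τ (d (τ (a * b))) = τ (d (τ a)) * b + ((-1 : k) ^ p) • (a * τ (d (τ b)))
    rw [map_mul, hL p (τ a) (τ b) (τ_mem_deg ha), map_add, map_mul, map_smul, map_mul, τ_τ, τ_τ]
  have hDD : ∀ x, D (D x) = 0 := by
    intro x
    show τ (d (τ (τ (d (τ x))))) = 0
    rw [τ_τ, hdd, map_zero]
  have hzj : ∀ j : ℕ, τ ((FreeAlgebra.ι k 1 - FreeAlgebra.ι k 0) ^ j) =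
      (FreeAlgebra.ι k 0) ^ j := by
    intro j
    rw [map_pow, map_sub, τ_ι1, τ_ι0, sub_sub_cancel]
  have hzj' : ∀ j : ℕ, τ ((FreeAlgebra.ι k 0) ^ j) =
      (FreeAlgebra.ι k 1 - FreeAlgebra.ι k 0) ^ j := by
    intro j
    rw [map_pow, τ_ι0]
  refine ⟨?_, ?_, ?_⟩
  · intro j
    refine ⟨pow_mem_deg (Submodule.sub_mem _ (ι_mem_deg1 1) (ι_mem_deg1 0)) j, ?_⟩
    have h := D_zpow D hDL hDz j
    have heq : d ((FreeAlgebra.ι k 1 - FreeAlgebra.ι k 0) ^ j) =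
        τ (D ((FreeAlgebra.ι k 0) ^ j)) := by
      conv_lhs => rw [← hzj' j]
      exact (τ_τ _).symm
    rw [heq, h, map_zero]
  · rintro j hj ⟨b, hbdeg, hbd⟩
    have hDb : D (τ b) = (FreeAlgebra.ι k 0) ^ j := by
      show τ (d (τ (τ b))) = _
      rw [τ_τ, hbd, hzj]
    exact core_nonexact D hDL hDz hDy j hDD (τ b) (τ_mem_deg hbdeg) hDb
  · intro j a ha hda
    have hDa : D (τ a) = 0 := by
      show τ (d (τ (τ a))) = 0
      rw [τ_τ, hda, map_zero]
    obtain ⟨hH, c, hc⟩ := main_identity D hDL hDz hDy j (τ a) (τ_mem_deg ha)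
    rw [hDa, map_zero, add_zero] at hc
    refine ⟨c, τ (H (τ a)), τ_mem_deg hH, ?_⟩
    have h3 := congrArg τ hc
    rw [τ_τ, map_add, map_smul, hzj'] at h3
    have h4 : d (τ (H (τ a))) = τ (D (H (τ a))) := by
      show _ = τ (τ (d (τ (H (τ a)))))
      rw [τ_τ]
    rw [h4]
    exact h3
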